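/- (Theorem 4) Assume $(\varrho_n)_{n \in \mathbb{Z}}$ is summable. Let $q_1 \le q$ be natural numbers, let $t_1,\dots,t_q \in \mathbb{R}$ and $C_1,\dots,C_q \ge 0$, and define $v : G_k \to \mathbb{R}$ by $v(x) = \sum_{\ell=1}^{q_1} t_\ell C_\ell \, \Sigma^-(\phi(x)) + \sum_{\ell=q_1+1}^{q} t_\ell C_\ell \, \Sigma^+(\phi(x))$ (a linear combination of the $p$-harmonic functions from the families $U_1$ and $U_2$). Then $v$ is $H_{ij}$-periodic and $p$-harmonic: $\Delta_p v(x) = 0$ for all $x \in G_k$. In other words, any tuple of functions from $U_1 \cup U_2$ has a linear relation. -/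

import Mathlib

open scoped BigOperators

noncomputable section

/-- The group representation `G_k` of the Cayley tree of order `k`:
the free product of `k+1` copies of the cyclic group of order two. -/
abbrev G (k : ℕ) : Type := Monoid.CoprodI (fun _ : Fin (k + 1) => Multiplicative (ZMod 2))

/-- The generators `a_0, ..., a_k` of `G_k`. -/
def gen (k : ℕ) (s : Fin (k + 1)) : G k :=
  Monoid.CoprodI.of (i := s) (Multiplicative.ofAdd (1 : ZMod 2))

/-- `φ_p(t) = |t|^(p-2) t` (real powers). -/
noncomputable def phiP (p t : ℝ) : ℝ := |t| ^ (p - 2) * t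

/-- The discrete `p`-Laplacian on the Cayley tree with resistances `r`:
`Δ_p u (x) = ∑_{s=0}^{k} φ_p ((u (x a_s) - u x) / r (x, x a_s))`. -/
noncomputable def pLap (k : ℕ) (p : ℝ) (r : G k × G k → ℝ) (u : G k → ℝ) (x : G k) : ℝ :=
  ∑ s : Fin (k + 1), phiP p ((u (x * gen k s) - u x) / r (x, x * gen k s))

/-- A function `u : G_k → ℝ` is `H`-periodic if `u (y x) = u x` for all `y ∈ H`, `x ∈ G_k`. -/
def IsPeriodic (k : ℕ) (H : Subgroup (G k)) (u : G k → ℝ) : Prop :=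
  ∀ y ∈ H, ∀ x : G k, u (y * x) = u x

/-- The coset index `φ(x) = ρ(x)(0)` associated to a permutation action `ρ` of `G_k` on `ℤ`. -/
def cosetIdx {k : ℕ} (ρ : G k →* Equiv.Perm ℤ) (x : G k) : ℤ := ρ x 0

private lemma phiP_zero' (p : ℝ) : phiP p 0 = 0 := by simp [phiP]

private lemma phiP_neg' (p t : ℝ) : phiP p (-t) = -phiP p t := by simp [phiP, mul_neg]

private lemma tsum_lt_succ' (ϱ : ℤ → ℝ) (hϱ : Summable ϱ) (n : ℤ) :
    (∑' s : {m : ℤ // m < n + 1}, ϱ s) = (∑' s : {m : ℤ // m < n}, ϱ s) + ϱ n := by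
  have h0 : {m : ℤ | m < n + 1} = {m : ℤ | m < n} ∪ {n} := by
    ext m; simp only [Set.mem_setOf_eq, Set.mem_union, Set.mem_singleton_iff]; omega
  have hd : Disjoint {m : ℤ | m < n} ({n} : Set ℤ) := by
    simp [Set.disjoint_singleton_right]
  calc (∑' s : {m : ℤ // m < n + 1}, ϱ s)
      = ∑' s : ↥({m : ℤ | m < n} ∪ {n}), ϱ s := tsum_congr_set_coe ϱ h0
    _ = (∑' s : {m : ℤ | m < n}, ϱ s) + ∑' s : ({n} : Set ℤ), ϱ s :=
        Summable.tsum_union_disjoint hd (hϱ.subtype _) (hϱ.subtype _)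
    _ = (∑' s : {m : ℤ // m < n}, ϱ s) + ϱ n := by rw [tsum_singleton]; rfl

private lemma tsum_ge_succ' (ϱ : ℤ → ℝ) (hϱ : Summable ϱ) (n : ℤ) :
    (∑' s : {m : ℤ // n ≤ m}, ϱ s) = ϱ n + (∑' s : {m : ℤ // n + 1 ≤ m}, ϱ s) := by
  have h0 : {m : ℤ | n ≤ m} = {n} ∪ {m : ℤ | n + 1 ≤ m} := by
    ext m; simp only [Set.mem_setOf_eq, Set.mem_union, Set.mem_singleton_iff]; omega
  have hd : Disjoint ({n} : Set ℤ) {m : ℤ | n + 1 ≤ m} := by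
    simp only [Set.disjoint_singleton_left, Set.mem_setOf_eq]; omega
  calc (∑' s : {m : ℤ // n ≤ m}, ϱ s)
      = ∑' s : ↥(({n} : Set ℤ) ∪ {m : ℤ | n + 1 ≤ m}), ϱ s := tsum_congr_set_coe ϱ h0
    _ = (∑' s : ({n} : Set ℤ), ϱ s) + ∑' s : {m : ℤ | n + 1 ≤ m}, ϱ s :=
        Summable.tsum_union_disjoint hd (hϱ.subtype _) (hϱ.subtype _)
    _ = ϱ n + (∑' s : {m : ℤ // n + 1 ≤ m}, ϱ s) := by rw [tsum_singleton]; rfl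

private def gfun (ϱ : ℤ → ℝ) (q₁ q : ℕ) (t C : Fin q → ℝ) (n : ℤ) : ℝ :=
  ∑ l : Fin q, if (l : ℕ) < q₁ then t l * C l * (∑' s : {m : ℤ // m < n}, ϱ s)
    else t l * C l * (∑' s : {m : ℤ // n ≤ m}, ϱ s)

private def Dconst (q₁ q : ℕ) (t C : Fin q → ℝ) : ℝ :=
  ∑ l : Fin q, if (l : ℕ) < q₁ then t l * C l else -(t l * C l)

private lemma gdiff (ϱ : ℤ → ℝ) (hϱ : Summable ϱ) (q₁ q : ℕ) (t C : Fin q → ℝ) (n : ℤ) :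
    gfun ϱ q₁ q t C (n + 1) = gfun ϱ q₁ q t C n + Dconst q₁ q t C * ϱ n := by
  rw [gfun, gfun, Dconst, Finset.sum_mul, ← Finset.sum_add_distrib]
  refine Finset.sum_congr rfl fun l _ => ?_
  by_cases h : (l : ℕ) < q₁ <;>
    simp only [h, if_true, if_false, tsum_lt_succ' ϱ hϱ n, tsum_ge_succ' ϱ hϱ n] <;> ring

theorem stmt13 (k : ℕ) (hk : 1 ≤ k) (p : ℝ) (hp1 : 1 < p)
    (r : G k × G k → ℝ) (hr_symm : ∀ x y : G k, r (x, y) = r (y, x)) (hr_pos : ∀ x y : G k, 0 < r (x, y))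
    (i j : Fin (k + 1)) (hij : i ≠ j)
    (ρ : G k →* Equiv.Perm ℤ)
    (hρi : ∀ n : ℤ, ρ (gen k i) n = 1 - n)
    (hρj : ∀ n : ℤ, ρ (gen k j) n = -1 - n)
    (hρs : ∀ s : Fin (k + 1), s ≠ i → s ≠ j → ρ (gen k s) = 1)
    (f : G k →* G k)
    (hfi : f (gen k i) = gen k i) (hfj : f (gen k j) = gen k j)
    (hfs : ∀ s : Fin (k + 1), s ≠ i → s ≠ j → f (gen k s) = 1)
    (ϱ : ℤ → ℝ) (hϱ_pos : ∀ n : ℤ, 0 < ϱ n)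
    (hrϱ : ∀ x y : G k, cosetIdx ρ y = cosetIdx ρ x + 1 → r (x, y) = ϱ (cosetIdx ρ x))
    (hϱ_sum : Summable ϱ)
    (q₁ q : ℕ) (hq : q₁ ≤ q) (t C : Fin q → ℝ) (hC : ∀ l : Fin q, 0 ≤ C l) :
    IsPeriodic k f.ker
        (fun x => ∑ l : Fin q,
          if (l : ℕ) < q₁ then t l * C l * (∑' s : {m : ℤ // m < cosetIdx ρ x}, ϱ s) else t l * C l * (∑' s : {m : ℤ // cosetIdx ρ x ≤ m}, ϱ s)) ∧
      ∀ x : G k, pLap k p r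
        (fun x => ∑ l : Fin q,
          if (l : ℕ) < q₁ then t l * C l * (∑' s : {m : ℤ // m < cosetIdx ρ x}, ϱ s) else t l * C l * (∑' s : {m : ℤ // cosetIdx ρ x ≤ m}, ϱ s)) x = 0 := by
  have hm1 : ∀ m' : Multiplicative (ZMod 2), m' = 1 ∨ m' = Multiplicative.ofAdd (1 : ZMod 2) := by
    decide
  have hcomp : ∀ x : G k, ρ (f x) = ρ x := by
    intro x
    induction x using Monoid.CoprodI.induction_on with
    | one => simp
    | of s m =>
      rcases hm1 m with rfl | rfl
      · simp
      · show ρ (f (gen k s)) = ρ (gen k s)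
        by_cases hi : s = i
        · rw [hi, hfi]
        · by_cases hj : s = j
          · rw [hj, hfj]
          · rw [hfs s hi hj, map_one, hρs s hi hj]
    | mul x y hx hy => rw [map_mul, map_mul, map_mul, hx, hy]
  have haff : ∀ x : G k, ∃ a ε : ℤ, (ε = 1 ∨ ε = -1) ∧ ∀ n : ℤ, ρ x n = a + ε * n := by
    intro x
    induction x using Monoid.CoprodI.induction_on with
    | one => exact ⟨0, 1, Or.inl rfl, by simp⟩
    | of s m =>
      rcases hm1 m with rfl | rfl
      · exact ⟨0, 1, Or.inl rfl, by simp⟩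
      · by_cases hi : s = i
        · refine ⟨1, -1, Or.inr rfl, fun n => ?_⟩
          show ρ (gen k s) n = 1 + -1 * n
          rw [hi, hρi]; ring
        · by_cases hj : s = j
          · refine ⟨-1, -1, Or.inr rfl, fun n => ?_⟩
            show ρ (gen k s) n = -1 + -1 * n
            rw [hj, hρj]; ring
          · refine ⟨0, 1, Or.inl rfl, fun n => ?_⟩
            show ρ (gen k s) n = 0 + 1 * n
            rw [hρs s hi hj]; simp
    | mul x y hx hy =>
      obtain ⟨a, ε, hε, hx⟩ := hx
      obtain ⟨b, δ, hδ, hy⟩ := hy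
      refine ⟨a + ε * b, ε * δ, ?_, fun n => ?_⟩
      · rcases hε with rfl | rfl <;> rcases hδ with rfl | rfl <;> norm_num
      · rw [map_mul, Equiv.Perm.mul_apply, hy, hx]; ring
  have hmain : ∀ (x : G k) (sp sm : Fin (k + 1)), sp ≠ sm →
      cosetIdx ρ (x * gen k sp) = cosetIdx ρ x + 1 →
      cosetIdx ρ (x * gen k sm) = cosetIdx ρ x - 1 →
      (∀ s, s ≠ sp → s ≠ sm → cosetIdx ρ (x * gen k s) = cosetIdx ρ x) →
      pLap k p r (fun y => gfun ϱ q₁ q t C (cosetIdx ρ y)) x = 0 := by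
    intro x sp sm hne hp' hm' hother
    set n := cosetIdx ρ x with hn
    set D := Dconst q₁ q t C with hD
    have hgp : gfun ϱ q₁ q t C (n + 1) = gfun ϱ q₁ q t C n + D * ϱ n :=
      gdiff ϱ hϱ_sum q₁ q t C n
    have hgm : gfun ϱ q₁ q t C (n - 1) = gfun ϱ q₁ q t C n - D * ϱ (n - 1) := by
      have h := gdiff ϱ hϱ_sum q₁ q t C (n - 1)
      rw [sub_add_cancel] at h
      linarith
    have hterm : ∀ s : Fin (k + 1),
        phiP p (((fun y => gfun ϱ q₁ q t C (cosetIdx ρ y)) (x * gen k s) -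
          (fun y => gfun ϱ q₁ q t C (cosetIdx ρ y)) x) / r (x, x * gen k s)) =
        (if s = sp then phiP p D else 0) + (if s = sm then -phiP p D else 0) := by
      intro s
      dsimp only
      by_cases hsp : s = sp
      · subst hsp
        have hr1 : r (x, x * gen k s) = ϱ n := hrϱ x (x * gen k s) hp'
        rw [hp', hgp, hr1, add_sub_cancel_left,
          mul_div_cancel_right₀ _ (ne_of_gt (hϱ_pos n)), if_pos rfl, if_neg hne, add_zero]
      · by_cases hsm : s = sm
        · subst hsm
          have hr2 : r (x, x * gen k s) = ϱ (n - 1) := by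
            have h := hrϱ (x * gen k s) x (by rw [hm']; ring)
            rw [hm'] at h
            rw [hr_symm, h]
          rw [hm', hgm, hr2, sub_sub_cancel_left, neg_div,
            mul_div_cancel_right₀ _ (ne_of_gt (hϱ_pos (n - 1))), phiP_neg',
            if_neg hsp, if_pos rfl, zero_add]
        · rw [hother s hsp hsm, sub_self, zero_div, phiP_zero', if_neg hsp, if_neg hsm, add_zero]
    simp only [pLap]
    rw [Finset.sum_congr rfl (fun s _ => hterm s), Finset.sum_add_distrib]
    simp [Finset.sum_ite_eq']
  constructor
  · intro y hy x
    have h1 : ρ y = 1 := by rw [← hcomp y, MonoidHom.mem_ker.mp hy, map_one]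
    have hcst : cosetIdx ρ (y * x) = cosetIdx ρ x := by
      simp [cosetIdx, map_mul, Equiv.Perm.mul_apply, h1]
    show gfun ϱ q₁ q t C (cosetIdx ρ (y * x)) = gfun ϱ q₁ q t C (cosetIdx ρ x)
    rw [hcst]
  · intro x
    obtain ⟨a, ε, hε, hax⟩ := haff x
    have hx0 : cosetIdx ρ x = a := by simp [cosetIdx, hax]
    have happ : ∀ s : Fin (k + 1), cosetIdx ρ (x * gen k s) = ρ x (ρ (gen k s) 0) := fun s => by
      simp [cosetIdx, map_mul, Equiv.Perm.mul_apply]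
    have hxi : cosetIdx ρ (x * gen k i) = a + ε := by rw [happ, hρi, hax]; ring
    have hxj : cosetIdx ρ (x * gen k j) = a - ε := by rw [happ, hρj, hax]; ring
    have hxs : ∀ s, s ≠ i → s ≠ j → cosetIdx ρ (x * gen k s) = cosetIdx ρ x := fun s hsi hsj => by
      rw [happ, hρs s hsi hsj, hx0]
      simp [hax]
    show pLap k p r (fun y => gfun ϱ q₁ q t C (cosetIdx ρ y)) x = 0
    rcases hε with rfl | rfl
    · exact hmain x i j hij (by rw [hxi, hx0]) (by rw [hxj, hx0]) hxs
    · exact hmain x j i hij.symm (by rw [hxj, hx0]; ring) (by rw [hxi, hx0]; ring)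
        (fun s hsj hsi => hxs s hsi hsj)
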